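/- The tadpole graph G_{p,q} has exactly binomial(p,2) + binomial(q+1,2) + (q+1)(p^2 - p + 2)/2 connected induced subgraphs. -/

import Mathlib

open SimpleGraph

/-- The number of connected induced subgraphs of `G`, i.e. the number of nonempty
vertex subsets of `G` inducing a connected subgraph. -/
noncomputable def numConn {V : Type*} (G : SimpleGraph V) : ℕ :=
  Nat.card {s : Finset V // (G.induce (s : Set V)).Connected}

/-- The number of `k`-vertex connected induced subgraphs of `G`. -/
noncomputable def numConnK {V : Type*} (G : SimpleGraph V) (k : ℕ) : ℕ :=
  Nat.card {s : Finset V // s.card = k ∧ (G.induce (s : Set V)).Connected}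

/-- The number of connected induced subgraphs of `G` containing the vertex `v`. -/
noncomputable def numConnAt {V : Type*} (G : SimpleGraph V) (v : V) : ℕ :=
  Nat.card {s : Finset V // v ∈ s ∧ (G.induce (s : Set V)).Connected}

/-- The star graph on `Fin n`, with center `0`. -/
def starGraph (n : ℕ) : SimpleGraph (Fin n) :=
  SimpleGraph.fromRel (fun i _ => (i : ℕ) = 0)

/-- The tadpole graph `G_{p,q}` (for `p ≥ 3`): the path `0 - 1 - ⋯ - (p+q-1)` together with
the edge `{0, p-1}` closing a cycle of length `p`; the tail of length `q` hangs at `p-1`. -/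
def tadpole (p q : ℕ) : SimpleGraph (Fin (p + q)) :=
  SimpleGraph.fromRel (fun i j => (i : ℕ) + 1 = j ∨ ((i : ℕ) = 0 ∧ (j : ℕ) = p - 1))

/-- The banner graph `B_n` (for `n ≥ 4`): a `4`-cycle `0-1-2-3-0` with `n - 4` pendant
vertices attached to vertex `0`. -/
def banner (n : ℕ) : SimpleGraph (Fin n) :=
  SimpleGraph.fromRel (fun i j =>
    ((i : ℕ) + 1 = j ∧ (j : ℕ) ≤ 3) ∨ ((i : ℕ) = 0 ∧ (j : ℕ) = 3) ∨ ((i : ℕ) = 0 ∧ 4 ≤ (j : ℕ)))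

/-- The graph `Q_n` (for `n > 2`): the star on `n` vertices with center `0`, plus an edge
joining the two leaves `1` and `2`. -/
def Qgraph (n : ℕ) : SimpleGraph (Fin n) :=
  SimpleGraph.fromRel (fun i j => (i : ℕ) = 0 ∨ ((i : ℕ) = 1 ∧ (j : ℕ) = 2))


open Finset

section TadpoleLemmas

variable {p q : ℕ}

lemma tadpole_adj (i j : Fin (p+q)) : (tadpole p q).Adj i j ↔ i ≠ j ∧
    ((i:ℕ)+1 = j ∨ (j:ℕ)+1 = i ∨ ((i:ℕ)=0 ∧ (j:ℕ)=p-1) ∨ ((j:ℕ)=0 ∧ (i:ℕ)=p-1)) := by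
  simp [tadpole, SimpleGraph.fromRel_adj]; tauto

lemma tadpole_adj_consec {i j : Fin (p+q)} (h : (i:ℕ)+1 = j) : (tadpole p q).Adj i j := by
  rw [tadpole_adj]
  exact ⟨by intro e; subst e; omega, Or.inl h⟩

/-- chain reachability inside an induced subgraph on a set containing an integer interval -/
lemma reach_chain (s : Finset (Fin (p+q))) :
    ∀ (d : ℕ) (x y : Fin (p+q)) (hx : x ∈ s) (hy : y ∈ s), (x:ℕ) + d = y →
    (∀ z : Fin (p+q), x ≤ z → z ≤ y → z ∈ s) →
    ((tadpole p q).induce (s : Set (Fin (p+q)))).Reachable ⟨x, hx⟩ ⟨y, hy⟩ := by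
  intro d
  induction d with
  | zero => intro x y hx hy hd _; have : x = y := Fin.ext (by omega); subst this; rfl
  | succ d ih =>
    intro x y hx hy hd hall
    have hylt : (y:ℕ) < p + q := y.isLt
    set y' : Fin (p+q) := ⟨(x:ℕ) + d, by omega⟩ with hy'
    have hy's : y' ∈ s := hall y' (by simp [hy', Fin.le_def]) (by simp [hy', Fin.le_def]; omega)
    have h1 : ((tadpole p q).induce (s : Set (Fin (p+q)))).Reachable ⟨x, hx⟩ ⟨y', hy's⟩ :=
      ih x y' hx hy's rfl (fun z h1 h2 => hall z h1 (le_trans h2 (by simp [hy', Fin.le_def]; omega)))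
    have hadj : ((tadpole p q).induce (s : Set (Fin (p+q)))).Adj ⟨y', hy's⟩ ⟨y, hy⟩ := by
      simpa using tadpole_adj_consec (i := y') (j := y) (by simp [hy']; omega)
    exact h1.trans hadj.reachable

/-- if no edge crosses a predicate, walks preserve it -/
lemma pred_of_reach (s : Finset (Fin (p+q))) (P : Fin (p+q) → Prop)
    (hP : ∀ u v : Fin (p+q), u ∈ s → v ∈ s → P u → ¬ P v → ¬ (tadpole p q).Adj u v)
    {x y : (s : Set (Fin (p+q)))}
    (h : ((tadpole p q).induce (s : Set (Fin (p+q)))).Reachable x y) (hx : P x) : P y := by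
  obtain ⟨w⟩ := h
  induction w with
  | nil => exact hx
  | @cons a b c hab w ih =>
    apply ih
    by_contra hb
    exact hP a b a.2 b.2 hx hb (by simpa using hab)

variable (hp : 3 ≤ p)
include hp

omit hp in
lemma conn_Icc (a b : Fin (p+q)) (hab : a ≤ b) :
    ((tadpole p q).induce ((Icc a b : Finset (Fin (p+q))) : Set (Fin (p+q)))).Connected := by
  rw [SimpleGraph.connected_iff]
  constructor
  · intro u v
    have hu := u.2; have hv := v.2
    simp only [Finset.coe_Icc, Set.mem_Icc] at hu hv
    have key : ∀ x y : Fin (p+q), (hx : a ≤ x ∧ x ≤ b) → (hy : a ≤ y ∧ y ≤ b) → x ≤ y →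
        ((tadpole p q).induce ((Icc a b : Finset (Fin (p+q))) : Set (Fin (p+q)))).Reachable
          ⟨x, by simp [hx.1, hx.2]⟩ ⟨y, by simp [hy.1, hy.2]⟩ := by
      intro x y hx hy hxy
      apply reach_chain _ ((y:ℕ) - x) x y _ _ (by rw [Fin.le_def] at hxy; omega)
      intro z h1 h2; simp [Finset.mem_Icc]; exact ⟨le_trans hx.1 h1, le_trans h2 hy.2⟩
    rcases le_total (u : Fin (p+q)) (v : Fin (p+q)) with h | h
    · simpa using key u v hu hv h
    · simpa using (key v u hv hu h).symm
  · exact ⟨⟨a, by simp [hab]⟩⟩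

lemma conn_two_piece (a b c : Fin (p+q)) (hab : (a:ℕ)+2 ≤ b) (hb : (b:ℕ) ≤ p-1)
    (hc : p-1 ≤ (c:ℕ)) :
    ((tadpole p q).induce ((Icc ⟨0, by omega⟩ a ∪ Icc b c : Finset (Fin (p+q))) : Set (Fin (p+q)))).Connected := by
  set s : Finset (Fin (p+q)) := Icc ⟨0, by omega⟩ a ∪ Icc b c with hs
  have hcp : (c:ℕ) < p + q := c.isLt
  have hw : (p - 1 : ℕ) < p + q := by omega
  set w : Fin (p+q) := ⟨p-1, hw⟩ with hwdef
  set z : Fin (p+q) := ⟨0, by omega⟩ with hzdef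
  have hbc : b ≤ c := by rw [Fin.le_def]; omega
  have hzs : z ∈ s := by
    rw [hs]; exact Finset.mem_union_left _ (Finset.mem_Icc.mpr ⟨le_refl _, by rw [Fin.le_def]; exact Nat.zero_le _⟩)
  have hws : w ∈ s := by
    rw [hs]; exact Finset.mem_union_right _ (Finset.mem_Icc.mpr ⟨by rw [Fin.le_def]; exact hb, by rw [Fin.le_def]; exact hc⟩)
  -- adjacency z ~ w
  have hzw : ((tadpole p q).induce (s : Set (Fin (p+q)))).Adj ⟨z, hzs⟩ ⟨w, hws⟩ := by
    have : (tadpole p q).Adj z w := by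
      rw [tadpole_adj]
      refine ⟨?_, Or.inr (Or.inr (Or.inl ⟨rfl, rfl⟩))⟩
      intro e; rw [Fin.ext_iff] at e; simp [hzdef, hwdef] at e; omega
    simpa using this
  -- every vertex reachable from z
  have key : ∀ u : (s : Set (Fin (p+q))),
      ((tadpole p q).induce (s : Set (Fin (p+q)))).Reachable ⟨z, hzs⟩ u := by
    rintro ⟨u, hu⟩
    simp only [hs, Finset.coe_union, Set.mem_union, Finset.coe_Icc, Set.mem_Icc] at hu
    rcases hu with ⟨_, hua⟩ | ⟨hbu, huc⟩
    · -- u in left piece: chain from z to u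
      apply reach_chain _ ((u:ℕ)) z u hzs _ (Nat.zero_add _)
      intro t h1 h2
      simp only [hs, Finset.mem_union, Finset.mem_Icc]
      exact Or.inl ⟨h1, le_trans h2 hua⟩
    · -- u in right piece: z ~ w, then chain between w and u
      have hus : u ∈ s := by simp [hs, Finset.mem_Icc]; right; exact ⟨hbu, huc⟩
      refine hzw.reachable.trans ?_
      have hall : ∀ x y : Fin (p+q), b ≤ x → y ≤ c → x ≤ y → True := fun _ _ _ _ _ => trivial
      rcases le_total w u with h | h
      · apply reach_chain _ ((u:ℕ) - w) w u hws hus (by rw [Fin.le_def] at h; omega)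
        intro t h1 h2
        simp only [hs, Finset.mem_union, Finset.mem_Icc]
        right
        refine ⟨le_trans ?_ h1, le_trans h2 huc⟩
        simp only [Fin.le_def, hwdef, Fin.val_mk]; omega
      · refine (reach_chain _ ((w:ℕ) - u) u w hus hws (by rw [Fin.le_def] at h; omega) ?_).symm
        intro t h1 h2
        simp only [hs, Finset.mem_union, Finset.mem_Icc]
        right
        refine ⟨le_trans hbu h1, le_trans h2 ?_⟩
        simp only [Fin.le_def, hwdef, Fin.val_mk]; omega
  rw [SimpleGraph.connected_iff]
  exact ⟨fun u v => (key u).symm.trans (key v), ⟨⟨z, hzs⟩⟩⟩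

omit hp in
lemma exists_cross (s : Finset (Fin (p+q)))
    (hconn : ((tadpole p q).induce (s : Set (Fin (p+q)))).Connected)
    (P : Fin (p+q) → Prop) (x y : Fin (p+q)) (hx : x ∈ s) (hy : y ∈ s)
    (hPx : P x) (hPy : ¬ P y) :
    ∃ u v, u ∈ s ∧ v ∈ s ∧ P u ∧ ¬ P v ∧ (tadpole p q).Adj u v := by
  by_contra hcon
  push_neg at hcon
  exact hPy (pred_of_reach s P (fun u v hu hv pu pv hadj => hcon u v hu hv pu pv hadj)
    (hconn.preconnected ⟨x, hx⟩ ⟨y, hy⟩) hPx)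

lemma gap_claim1 (s : Finset (Fin (p+q)))
    (hconn : ((tadpole p q).induce (s : Set (Fin (p+q)))).Connected)
    (x y g : Fin (p+q)) (hx : x ∈ s) (hy : y ∈ s) (hg : g ∉ s)
    (hxg : (x:ℕ) < g) (hgy : (g:ℕ) < y) :
    0 < (g:ℕ) ∧ (g:ℕ) < p-1 ∧ (⟨0, by omega⟩ : Fin (p+q)) ∈ s ∧
      (⟨p-1, by omega⟩ : Fin (p+q)) ∈ s := by
  obtain ⟨u, v, hu, hv, hPu, hPv, hadj⟩ :=
    exists_cross s hconn (fun u => (u:ℕ) < g) x y hx hy hxg (by omega)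
  rw [tadpole_adj] at hadj
  push_neg at hPv
  have hvg : (v:ℕ) ≠ g := fun e => hg (Fin.ext_iff.mpr e ▸ hv)
  rcases hadj.2 with h | h | ⟨h1, h2⟩ | ⟨h1, h2⟩
  · omega
  · omega
  · have hu0 : u = ⟨0, by omega⟩ := Fin.ext h1
    have hv1 : v = ⟨p-1, by omega⟩ := Fin.ext h2
    exact ⟨by omega, by omega, hu0 ▸ hu, hv1 ▸ hv⟩
  · omega

lemma gap_claim2 (s : Finset (Fin (p+q)))
    (hconn : ((tadpole p q).induce (s : Set (Fin (p+q)))).Connected)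
    (g1 g2 v : Fin (p+q)) (hg1 : g1 ∉ s) (hg2 : g2 ∉ s) (hg2p : (g2:ℕ) < p-1)
    (h0 : (⟨0, by omega⟩ : Fin (p+q)) ∈ s) (hv : v ∈ s)
    (h1v : (g1:ℕ) < v) (hv2 : (v:ℕ) < g2) : False := by
  obtain ⟨u, w, hu, hw, hPu, hPw, hadj⟩ :=
    exists_cross s hconn (fun u => (g1:ℕ) < u ∧ (u:ℕ) < g2) v ⟨0, by omega⟩ hv h0
      ⟨h1v, hv2⟩ (by simp only [Fin.val_mk]; omega)
  rw [tadpole_adj] at hadj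
  push_neg at hPw
  have hwg1 : (w:ℕ) ≠ g1 := fun e => hg1 (Fin.ext_iff.mpr e ▸ hw)
  have hwg2 : (w:ℕ) ≠ g2 := fun e => hg2 (Fin.ext_iff.mpr e ▸ hw)
  rcases hadj.2 with h | h | ⟨h1, h2⟩ | ⟨h1, h2⟩ <;> omega

lemma shape_of_conn (s : Finset (Fin (p+q)))
    (hconn : ((tadpole p q).induce (s : Set (Fin (p+q)))).Connected) :
    (∃ a b : Fin (p+q), a ≤ b ∧ s = Icc a b) ∨
    (∃ a b c : Fin (p+q), (a:ℕ)+2 ≤ b ∧ (b:ℕ) ≤ p-1 ∧ p-1 ≤ (c:ℕ) ∧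
      s = Icc ⟨0, by omega⟩ a ∪ Icc b c) := by
  obtain ⟨⟨x0, hx0⟩⟩ := hconn.nonempty
  have hne : s.Nonempty := ⟨x0, hx0⟩
  set A := s.min' hne with hA
  set M := s.max' hne with hM
  have hAs : A ∈ s := s.min'_mem hne
  have hMs : M ∈ s := s.max'_mem hne
  by_cases hgap : ∃ g : Fin (p+q), g ∉ s ∧ (A:ℕ) < g ∧ (g:ℕ) < M
  · right
    set gapset : Finset (Fin (p+q)) :=
      Finset.univ.filter (fun g => g ∉ s ∧ (A:ℕ) < g ∧ (g:ℕ) < M) with hgs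
    have hmemgap : ∀ g : Fin (p+q), g ∈ gapset ↔ (g ∉ s ∧ (A:ℕ) < g ∧ (g:ℕ) < M) := by
      intro g
      rw [hgs, Finset.mem_filter]
      simp
    have hgne : gapset.Nonempty := by
      obtain ⟨g, h1, h2, h3⟩ := hgap
      exact ⟨g, (hmemgap g).mpr ⟨h1, h2, h3⟩⟩
    obtain ⟨hg0s, hAg0, hg0M⟩ := (hmemgap _).mp (gapset.min'_mem hgne)
    obtain ⟨hg1s, hAg1, hg1M⟩ := (hmemgap _).mp (gapset.max'_mem hgne)
    set g0 := gapset.min' hgne with hg0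
    set g1 := gapset.max' hgne with hg1
    obtain ⟨hg0pos, hg0p, h0s, hps⟩ := gap_claim1 hp s hconn A M g0 hAs hMs hg0s hAg0 hg0M
    obtain ⟨hg1pos, hg1p, -, -⟩ := gap_claim1 hp s hconn A M g1 hAs hMs hg1s hAg1 hg1M
    have hg01 : (g0:ℕ) ≤ g1 := gapset.min'_le g1 (gapset.max'_mem hgne)
    have hA0 : (A:ℕ) = 0 := by
      have h1 : A ≤ (⟨0, by omega⟩ : Fin (p+q)) := s.min'_le _ h0s
      rw [Fin.le_def] at h1
      simpa using h1
    have hMp : p - 1 ≤ (M:ℕ) := by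
      have := s.le_max' _ hps
      rw [Fin.le_def] at this
      simpa using this
    have hMlt : (M:ℕ) < p + q := M.isLt
    refine ⟨⟨(g0:ℕ)-1, by omega⟩, ⟨(g1:ℕ)+1, by omega⟩, M,
      by simp only [Fin.val_mk]; omega, by simp only [Fin.val_mk]; omega, hMp, ?_⟩
    ext z
    simp only [Finset.mem_union, Finset.mem_Icc, Fin.le_def, Fin.val_mk]
    constructor
    · intro hz
      have hzM : (z:ℕ) ≤ M := by
        have := s.le_max' z hz; rwa [Fin.le_def] at this
      rcases lt_or_ge (z:ℕ) (g0:ℕ) with h | h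
      · left; omega
      · rcases lt_or_ge (g1:ℕ) (z:ℕ) with h' | h'
        · right; omega
        · exfalso
          have hzg0 : (z:ℕ) ≠ g0 := fun e => hg0s (Fin.ext_iff.mpr e ▸ hz)
          have hzg1 : (z:ℕ) ≠ g1 := fun e => hg1s (Fin.ext_iff.mpr e ▸ hz)
          exact gap_claim2 hp s hconn g0 g1 z hg0s hg1s hg1p h0s hz (by omega) (by omega)
    · intro hz
      rcases hz with ⟨-, h2⟩ | ⟨h1, h2⟩
      · by_contra hzs
        have hz0 : (z:ℕ) ≠ 0 := by
          intro e
          exact hzs (by rwa [show z = A from Fin.ext (by omega)])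
        have hzgap : z ∈ gapset := (hmemgap z).mpr ⟨hzs, by omega, by omega⟩
        have := gapset.min'_le z hzgap
        rw [← hg0, Fin.le_def] at this
        omega
      · by_contra hzs
        have hzM : (z:ℕ) ≠ M := fun e => hzs (by rwa [show z = M from Fin.ext e])
        have hzgap : z ∈ gapset := (hmemgap z).mpr ⟨hzs, by omega, by omega⟩
        have := gapset.le_max' z hzgap
        rw [← hg1, Fin.le_def] at this
        omega
  · left
    push_neg at hgap
    refine ⟨A, M, s.min'_le M hMs, ?_⟩
    ext z
    simp only [Finset.mem_Icc]
    constructor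
    · intro hz
      exact ⟨s.min'_le z hz, s.le_max' z hz⟩
    · rintro ⟨h1, h2⟩
      by_contra hzs
      have hzA : (z:ℕ) ≠ A := fun e => hzs (Fin.ext_iff.mpr e ▸ hAs)
      have hzM : (z:ℕ) ≠ M := fun e => hzs (Fin.ext_iff.mpr e ▸ hMs)
      rw [Fin.le_def] at h1 h2
      have := hgap z hzs
      omega


end TadpoleLemmas

lemma card_le_pairs (m : ℕ) :
    ((univ : Finset (Fin m × Fin m)).filter (fun x => x.1 ≤ x.2)).card = m*(m+1)/2 := by
  rw [← Fintype.card_subtype]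
  rw [← Fintype.card_congr (Sym2.sortEquiv (α := Fin m)), Sym2.card, Nat.choose_two_right,
    Fintype.card_fin]
  rw [Nat.mul_comm]
  norm_num

lemma card_pairs2 (p q : ℕ) (hp : 3 ≤ p) :
    ((univ : Finset (Fin (p+q) × Fin (p+q))).filter
      (fun x => (x.1:ℕ)+2 ≤ (x.2:ℕ) ∧ (x.2:ℕ) ≤ p-1)).card = (p-2)*(p-1)/2 := by
  have h := card_le_pairs (p-2)
  have h2 : (p-2)*((p-2)+1)/2 = (p-2)*(p-1)/2 := by congr 2; omega
  rw [← h2, ← h]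
  set s := (univ : Finset (Fin (p+q) × Fin (p+q))).filter
      (fun x => (x.1:ℕ)+2 ≤ (x.2:ℕ) ∧ (x.2:ℕ) ≤ p-1) with hs
  set t := (univ : Finset (Fin (p-2) × Fin (p-2))).filter (fun x => x.1 ≤ x.2) with ht
  have hmems : ∀ x : Fin (p+q) × Fin (p+q), x ∈ s ↔ ((x.1:ℕ)+2 ≤ (x.2:ℕ) ∧ (x.2:ℕ) ≤ p-1) := by
    intro x; rw [hs, mem_filter]; simp
  have hmemt : ∀ y : Fin (p-2) × Fin (p-2), y ∈ t ↔ (y.1:ℕ) ≤ (y.2:ℕ) := by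
    intro y; rw [ht, mem_filter, Fin.le_def]; simp
  refine Finset.card_bij'
    (fun (x : Fin (p+q) × Fin (p+q)) (hx : x ∈ s) =>
      ((⟨(x.1:ℕ), by have := (hmems x).mp hx; omega⟩ : Fin (p-2)),
       (⟨(x.2:ℕ)-2, by have := (hmems x).mp hx; omega⟩ : Fin (p-2))))
    (fun (y : Fin (p-2) × Fin (p-2)) (hy : y ∈ t) =>
      ((⟨(y.1:ℕ), by have := y.1.isLt; omega⟩ : Fin (p+q)),
       (⟨(y.2:ℕ)+2, by have := y.2.isLt; omega⟩ : Fin (p+q))))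
    ?_ ?_ ?_ ?_
  · intro x hx
    have h1 := (hmems x).mp hx
    rw [hmemt]
    simp only [Fin.val_mk]
    omega
  · intro y hy
    have h1 := (hmemt y).mp hy
    have h2 := y.2.isLt
    rw [hmems]
    simp only [Fin.val_mk]
    omega
  · intro x hx
    have h1 := (hmems x).mp hx
    rw [Prod.ext_iff]
    refine ⟨Fin.ext ?_, Fin.ext ?_⟩ <;> simp only [Fin.val_mk] <;> omega
  · intro y hy
    rw [Prod.ext_iff]
    refine ⟨Fin.ext ?_, Fin.ext ?_⟩ <;> simp only [Fin.val_mk] <;> omega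

lemma card_tailset (p q : ℕ) (hp : 3 ≤ p) :
    ((univ : Finset (Fin (p+q))).filter (fun c : Fin (p+q) => p-1 ≤ (c:ℕ))).card = q+1 := by
  rw [show q+1 = (univ : Finset (Fin (q+1))).card by simp]
  set s := (univ : Finset (Fin (p+q))).filter (fun c : Fin (p+q) => p-1 ≤ (c:ℕ)) with hs
  have hmems : ∀ c : Fin (p+q), c ∈ s ↔ p-1 ≤ (c:ℕ) := by
    intro c; rw [hs, mem_filter]; simp
  refine Finset.card_bij'
    (fun (c : Fin (p+q)) (hc : c ∈ s) =>
      (⟨(c:ℕ)-(p-1), by have := c.isLt; have := (hmems c).mp hc; omega⟩ : Fin (q+1)))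
    (fun (y : Fin (q+1)) _ => (⟨p-1+(y:ℕ), by have := y.isLt; omega⟩ : Fin (p+q)))
    ?_ ?_ ?_ ?_
  · intro a ha; exact mem_univ _
  · intro y hy
    rw [hmems]
    simp only [Fin.val_mk]
    omega
  · intro a ha
    have := (hmems a).mp ha
    ext; simp; omega
  · intro y hy
    ext; simp

lemma final_arith (r q : ℕ) :
    (r+3+q)*((r+3+q)+1)/2 + (r+1)*(r+2)/2 * (q+1) =
      (r+3).choose 2 + (q+1).choose 2 + (q+1) * ((r+3)^2 - (r+3) + 2) / 2 := by
  obtain ⟨t1, ht1⟩ := Nat.even_mul_succ_self (r+3+q)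
  obtain ⟨t2, ht2'⟩ := Nat.even_mul_succ_self (r+1)
  obtain ⟨t3, ht3⟩ := Nat.even_mul_succ_self q
  obtain ⟨t4, ht4'⟩ := Nat.even_mul_succ_self (r+2)
  have ht2 : (r+1)*(r+2) = t2 + t2 := by rw [← ht2']
  have ht4 : (r+2)*(r+3) = t4 + t4 := by rw [← ht4']
  have e1 : (r+3+q)*((r+3+q)+1)/2 = t1 := by omega
  have e2 : (r+1)*(r+2)/2 = t2 := by omega
  have e3 : (q+1).choose 2 = t3 := by
    rw [Nat.choose_two_right]
    norm_num
    rw [Nat.mul_comm]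
    omega
  have e4 : (r+3).choose 2 = t4 := by
    rw [Nat.choose_two_right]
    norm_num
    rw [Nat.mul_comm]
    omega
  have hsq : (r+3)^2 - (r+3) + 2 = 2*t4 + 2 := by
    rw [show (r+3)^2 = (r+2)*(r+3)+(r+3) from by ring]
    omega
  rw [e1, e2, e3, e4, hsq]
  have hd : (q+1) * (2*t4+2) / 2 = (q+1)*(t4+1) := by
    rw [show (q+1)*(2*t4+2) = ((q+1)*(t4+1))*2 from by ring]
    omega
  rw [hd]
  have key : 2*(t1 + t2*(q+1)) = 2*(t4 + t3 + (q+1)*(t4+1)) := by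
    calc 2*(t1+t2*(q+1)) = (t1+t1) + (t2+t2)*(q+1) := by ring
    _ = (r+3+q)*((r+3+q)+1) + ((r+1)*(r+2))*(q+1) := by rw [← ht1, ← ht2]
    _ = (r+2)*(r+3) + q*(q+1) + (q+1)*(((r+2)*(r+3))+2) := by ring
    _ = (t4+t4) + (t3+t3) + (q+1)*((t4+t4)+2) := by rw [ht4, ht3]
    _ = 2*(t4 + t3 + (q+1)*(t4+1)) := by ring
  omega

lemma two_piece_mem (h0 : 0 < p + q) (a b c z : Fin (p+q)) :
    z ∈ Icc (⟨0, h0⟩ : Fin (p+q)) a ∪ Icc b c ↔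
      ((z:ℕ) ≤ a ∨ ((b:ℕ) ≤ z ∧ (z:ℕ) ≤ c)) := by
  simp only [mem_union, mem_Icc, Fin.le_def, Fin.val_mk]
  omega

theorem stmt8' (p q : ℕ) (hp : 3 ≤ p) :
    Nat.card {s : Finset (Fin (p+q)) // ((tadpole p q).induce (s : Set (Fin (p+q)))).Connected} =
      p.choose 2 + (q + 1).choose 2 + (q + 1) * (p ^ 2 - p + 2) / 2 := by
  classical
  have h0 : 0 < p + q := by omega
  -- characterization
  have hchar : ∀ s : Finset (Fin (p+q)),
      ((tadpole p q).induce (s : Set (Fin (p+q)))).Connected ↔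
      ((∃ a b : Fin (p+q), a ≤ b ∧ s = Icc a b) ∨
       (∃ a b c : Fin (p+q), (a:ℕ)+2 ≤ b ∧ (b:ℕ) ≤ p-1 ∧ p-1 ≤ (c:ℕ) ∧
         s = Icc ⟨0, h0⟩ a ∪ Icc b c)) := by
    intro s
    constructor
    · exact shape_of_conn hp s
    · rintro (⟨a, b, hab, rfl⟩ | ⟨a, b, c, h1, h2, h3, rfl⟩)
      · exact conn_Icc a b hab
      · exact conn_two_piece hp a b c h1 h2 h3
  set S1 := (univ : Finset (Fin (p+q) × Fin (p+q))).filter (fun x => x.1 ≤ x.2) with hS1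
  set Sab := (univ : Finset (Fin (p+q) × Fin (p+q))).filter
      (fun x => (x.1:ℕ)+2 ≤ (x.2:ℕ) ∧ (x.2:ℕ) ≤ p-1) with hSab
  set Sc := (univ : Finset (Fin (p+q))).filter (fun c : Fin (p+q) => p-1 ≤ (c:ℕ)) with hSc
  set G1 := S1.image (fun x : Fin (p+q) × Fin (p+q) => Icc x.1 x.2) with hG1
  set G2 := (Sab ×ˢ Sc).image
      (fun x : (Fin (p+q) × Fin (p+q)) × Fin (p+q) => Icc (⟨0, h0⟩ : Fin (p+q)) x.1.1 ∪ Icc x.1.2 x.2) with hG2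
  have hmemS1 : ∀ x : Fin (p+q) × Fin (p+q), x ∈ S1 ↔ x.1 ≤ x.2 := by
    intro x; rw [hS1, mem_filter]; simp
  have hmemSab : ∀ x : Fin (p+q) × Fin (p+q), x ∈ Sab ↔ ((x.1:ℕ)+2 ≤ (x.2:ℕ) ∧ (x.2:ℕ) ≤ p-1) := by
    intro x; rw [hSab, mem_filter]; simp
  have hmemSc : ∀ c : Fin (p+q), c ∈ Sc ↔ p-1 ≤ (c:ℕ) := by
    intro c; rw [hSc, mem_filter]; simp
  -- the count as a filter card
  have hcount : Nat.card {s : Finset (Fin (p+q)) //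
      ((tadpole p q).induce (s : Set (Fin (p+q)))).Connected} = (G1 ∪ G2).card := by
    rw [Nat.card_eq_fintype_card, Fintype.card_subtype]
    congr 1
    ext s
    rw [mem_filter, mem_union]
    simp only [mem_univ, true_and]
    rw [hchar s]
    constructor
    · rintro (⟨a, b, hab, rfl⟩ | ⟨a, b, c, h1, h2, h3, rfl⟩)
      · left; rw [hG1, mem_image]
        exact ⟨(a, b), (hmemS1 (a,b)).mpr hab, rfl⟩
      · right; rw [hG2, mem_image]
        refine ⟨((a, b), c), ?_, rfl⟩
        rw [mem_product]
        exact ⟨(hmemSab (a,b)).mpr ⟨h1, h2⟩, (hmemSc c).mpr h3⟩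
    · rintro (h | h)
      · rw [hG1, mem_image] at h
        obtain ⟨x, hx, rfl⟩ := h
        exact Or.inl ⟨x.1, x.2, (hmemS1 x).mp hx, rfl⟩
      · rw [hG2, mem_image] at h
        obtain ⟨x, hx, rfl⟩ := h
        rw [mem_product] at hx
        obtain ⟨h1, h2⟩ := (hmemSab x.1).mp hx.1
        exact Or.inr ⟨x.1.1, x.1.2, x.2, h1, h2, (hmemSc x.2).mp hx.2, rfl⟩
  -- injectivity on S1
  have hinj1 : Set.InjOn (fun x : Fin (p+q) × Fin (p+q) => Icc x.1 x.2) ↑S1 := by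
    intro x hx y hy he
    rw [Finset.mem_coe, hmemS1] at hx hy
    simp only at he
    have h1 : x.1 ∈ Icc y.1 y.2 := by rw [← he]; exact mem_Icc.mpr ⟨le_refl _, hx⟩
    have h2 : y.1 ∈ Icc x.1 x.2 := by rw [he]; exact mem_Icc.mpr ⟨le_refl _, hy⟩
    have h3 : x.2 ∈ Icc y.1 y.2 := by rw [← he]; exact mem_Icc.mpr ⟨hx, le_refl _⟩
    have h4 : y.2 ∈ Icc x.1 x.2 := by rw [he]; exact mem_Icc.mpr ⟨hy, le_refl _⟩
    rw [mem_Icc] at h1 h2 h3 h4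
    exact Prod.ext (le_antisymm h2.1 h1.1) (le_antisymm h3.2 h4.2)
  -- injectivity on Sab ×ˢ Sc
  have hinj2 : Set.InjOn
      (fun x : (Fin (p+q) × Fin (p+q)) × Fin (p+q) => Icc (⟨0, h0⟩ : Fin (p+q)) x.1.1 ∪ Icc x.1.2 x.2)
      ↑(Sab ×ˢ Sc) := by
    intro x hx y hy he
    rw [Finset.mem_coe, mem_product] at hx hy
    obtain ⟨ha1, ha2⟩ := (hmemSab x.1).mp hx.1
    have ha3 := (hmemSc x.2).mp hx.2
    obtain ⟨hb1, hb2⟩ := (hmemSab y.1).mp hy.1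
    have hb3 := (hmemSc y.2).mp hy.2
    simp only at he
    have hm : ∀ z : Fin (p+q),
        ((z:ℕ) ≤ x.1.1 ∨ ((x.1.2:ℕ) ≤ z ∧ (z:ℕ) ≤ x.2)) ↔
        ((z:ℕ) ≤ y.1.1 ∨ ((y.1.2:ℕ) ≤ z ∧ (z:ℕ) ≤ y.2)) := by
      intro z
      rw [← two_piece_mem h0, ← two_piece_mem h0, he]
    have hx11 := x.1.1.isLt
    have hy11 := y.1.1.isLt
    have haa : (x.1.1:ℕ) = y.1.1 := by
      by_contra hne
      rcases Nat.lt_or_ge (x.1.1:ℕ) (y.1.1:ℕ) with h | h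
      · have := (hm ⟨(x.1.1:ℕ)+1, by omega⟩).mpr (Or.inl (by simp only [Fin.val_mk]; omega))
        simp only [Fin.val_mk] at this
        omega
      · have := (hm ⟨(y.1.1:ℕ)+1, by omega⟩).mp (Or.inl (by simp only [Fin.val_mk]; omega))
        simp only [Fin.val_mk] at this
        omega
    have hbb : (x.1.2:ℕ) = y.1.2 := by
      by_contra hne
      rcases Nat.lt_or_ge (x.1.2:ℕ) (y.1.2:ℕ) with h | h
      · have := (hm x.1.2).mp (Or.inr ⟨le_refl _, by omega⟩)
        omega
      · have := (hm y.1.2).mpr (Or.inr ⟨le_refl _, by omega⟩)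
        omega
    have hcc : (x.2:ℕ) = y.2 := by
      by_contra hne
      rcases Nat.lt_or_ge (x.2:ℕ) (y.2:ℕ) with h | h
      · have := (hm y.2).mpr (Or.inr ⟨by omega, le_refl _⟩)
        omega
      · have := (hm x.2).mp (Or.inr ⟨by omega, le_refl _⟩)
        omega
    rw [Prod.ext_iff, Prod.ext_iff]
    exact ⟨⟨Fin.ext haa, Fin.ext hbb⟩, Fin.ext hcc⟩
  -- disjointness
  have hdisj : Disjoint G1 G2 := by
    rw [Finset.disjoint_left]
    intro s hs1 hs2
    rw [hG1, mem_image] at hs1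
    rw [hG2, mem_image] at hs2
    obtain ⟨x, hx, rfl⟩ := hs1
    obtain ⟨y, hy, he⟩ := hs2
    rw [mem_product] at hy
    obtain ⟨h1, h2⟩ := (hmemSab y.1).mp hy.1
    have h3 := (hmemSc y.2).mp hy.2
    have hxle := (hmemS1 x).mp hx
    have ha'mem : y.1.1 ∈ Icc x.1 x.2 := by
      rw [← he, two_piece_mem h0]
      left; omega
    have hc'mem : y.2 ∈ Icc x.1 x.2 := by
      rw [← he, two_piece_mem h0]
      right; exact ⟨by omega, le_refl _⟩
    rw [mem_Icc, Fin.le_def, Fin.le_def] at ha'mem hc'mem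
    have hzb : (y.1.1:ℕ)+1 < p + q := by have := y.2.isLt; omega
    have hz : (⟨(y.1.1:ℕ)+1, hzb⟩ : Fin (p+q)) ∈ Icc x.1 x.2 := by
      rw [mem_Icc, Fin.le_def, Fin.le_def]
      simp only [Fin.val_mk]
      omega
    rw [← he, two_piece_mem h0] at hz
    simp only [Fin.val_mk] at hz
    omega
  -- cardinality computation
  rw [hcount, card_union_of_disjoint hdisj]
  rw [hG1, hG2, Finset.card_image_of_injOn hinj1, Finset.card_image_of_injOn hinj2,
    Finset.card_product]
  rw [hS1, hSab, hSc, card_le_pairs (p+q), card_pairs2 p q hp, card_tailset p q hp]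
  obtain ⟨r, rfl⟩ : ∃ r, p = r + 3 := ⟨p - 3, by omega⟩
  rw [show r+3-2 = r+1 from by omega, show r+3-1 = r+2 from by omega]
  exact final_arith r q


theorem stmt8 (p q : ℕ) (hp : 3 ≤ p) :
    numConn (tadpole p q) =
      p.choose 2 + (q + 1).choose 2 + (q + 1) * (p ^ 2 - p + 2) / 2 := by
  rw [numConn]
  exact stmt8' p q hp
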